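/- arXiv:2411.01321 — 2 statements merged into one kernel-verified Lean document; each statement's English description precedes it below -/
import Mathlib

section
/- Let E be a real normed vector space and let S, T ⊆ E be sets such that S, T, Sᶜ, Tᶜ are all nonempty, and such that the Hausdorff distances hausdorffDist(S, T) and hausdorffDist(Sᶜ, Tᶜ) are finite. Then for every q ∈ E, |sdf(q, S) − sdf(q, T)| ≤ hausdorffDist(S, T) + hausdorffDist(Sᶜ, Tᶜ). -/
/-- Signed distance function from a point to (the boundary of) a set:
negative inside `S`, positive outside. -/
noncomputable def sdf {E : Type*} [NormedAddCommGroup E] (q : E) (S : Set E) : ℝ :=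
  Metric.infDist q S - Metric.infDist q Sᶜ

/-- The signed distance functions of two sets differ by at most the sum of the
Hausdorff distances between the sets and between their complements. -/
theorem sdf_dist_le_hausdorff {E : Type*} [NormedAddCommGroup E] [NormedSpace ℝ E]
    (S T : Set E) (hS : S.Nonempty) (hT : T.Nonempty)
    (hSc : Sᶜ.Nonempty) (hTc : Tᶜ.Nonempty)
    (hfin : EMetric.hausdorffEdist S T ≠ ⊤)
    (hfinc : EMetric.hausdorffEdist Sᶜ Tᶜ ≠ ⊤) :
    ∀ q : E, |sdf q S - sdf q T| ≤
      Metric.hausdorffDist S T + Metric.hausdorffDist Sᶜ Tᶜ := by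
  intro q
  have h1 : |Metric.infDist q S - Metric.infDist q T| ≤ Metric.hausdorffDist S T := by
    rw [abs_sub_le_iff]
    constructor
    · linarith [Metric.infDist_le_infDist_add_hausdorffDist (x := q) (s := T) (t := S)
        (by rw [EMetric.hausdorffEdist_comm]; exact hfin),
        Metric.hausdorffDist_comm (s := S) (t := T)]
    · linarith [Metric.infDist_le_infDist_add_hausdorffDist (x := q) (s := S) hfin]
  have h2 : |Metric.infDist q Sᶜ - Metric.infDist q Tᶜ| ≤ Metric.hausdorffDist Sᶜ Tᶜ := by
    rw [abs_sub_le_iff]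
    constructor
    · linarith [Metric.infDist_le_infDist_add_hausdorffDist (x := q) (s := Tᶜ) (t := Sᶜ)
        (by rw [EMetric.hausdorffEdist_comm]; exact hfinc),
        Metric.hausdorffDist_comm (s := Sᶜ) (t := Tᶜ)]
    · linarith [Metric.infDist_le_infDist_add_hausdorffDist (x := q) (s := Sᶜ) hfinc]
  unfold sdf
  have := abs_sub (Metric.infDist q S - Metric.infDist q T)
    (Metric.infDist q Sᶜ - Metric.infDist q Tᶜ)
  calc |Metric.infDist q S - Metric.infDist q Sᶜ - (Metric.infDist q T - Metric.infDist q Tᶜ)|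
      = |(Metric.infDist q S - Metric.infDist q T) - (Metric.infDist q Sᶜ - Metric.infDist q Tᶜ)| := by
        ring_nf
    _ ≤ |Metric.infDist q S - Metric.infDist q T| + |Metric.infDist q Sᶜ - Metric.infDist q Tᶜ| :=
        abs_sub _ _
    _ ≤ _ := add_le_add h1 h2
end

section
/- (CBF invariance along a trajectory.) Let h : ℝ × ℝⁿ → ℝ be continuously differentiable, let α : ℝ → ℝ be locally Lipschitz, monotone nondecreasing with α(0) = 0, and let x : ℝ → ℝⁿ be differentiable. Suppose that for all t ≥ 0, ⟨∇ₓ h(t, x(t)), x′(t)⟩ + (∂h/∂t)(t, x(t)) ≥ −α(h(t, x(t))), and that h(0, x(0)) ≥ 0. Then h(t, x(t)) ≥ 0 for all t ≥ 0. -/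
/-- CBF invariance along a trajectory: if the total time derivative of
`t ↦ h t (x t)` satisfies the CBF inequality
`⟨∇ₓ h, x'⟩ + ∂h/∂t ≥ -α (h)` for all `t ≥ 0` and `h 0 (x 0) ≥ 0`,
then `h t (x t) ≥ 0` for all `t ≥ 0`. -/
theorem cbf_invariance {n : ℕ} (h : ℝ → EuclideanSpace ℝ (Fin n) → ℝ)
    (hh : ContDiff ℝ 1 (fun p : ℝ × EuclideanSpace ℝ (Fin n) => h p.1 p.2))
    (α : ℝ → ℝ) (hα_lip : LocallyLipschitz α) (hα_mono : Monotone α)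
    (hα0 : α 0 = 0)
    (x : ℝ → EuclideanSpace ℝ (Fin n)) (hx : Differentiable ℝ x)
    (hineq : ∀ t : ℝ, 0 ≤ t →
      fderiv ℝ (h t) (x t) (deriv x t) + deriv (fun s => h s (x t)) t ≥
        -α (h t (x t)))
    (h0 : h 0 (x 0) ≥ 0) :
    ∀ t : ℝ, 0 ≤ t → h t (x t) ≥ 0 := by
  set H : ℝ × EuclideanSpace ℝ (Fin n) → ℝ := fun p => h p.1 p.2 with hH
  have hHd : Differentiable ℝ H := hh.differentiable one_ne_zero
  set φ : ℝ → ℝ := fun t => h t (x t) with hφ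
  -- derivative of φ
  have key : ∀ t : ℝ, HasDerivAt φ
      (fderiv ℝ (h t) (x t) (deriv x t) + deriv (fun s => h s (x t)) t) t := by
    intro t
    set D := fderiv ℝ H (t, x t) with hD
    have hDH : HasFDerivAt H D (t, x t) := (hHd (t, x t)).hasFDerivAt
    have hc : HasDerivAt (fun s => ((s, x s) : ℝ × EuclideanSpace ℝ (Fin n))) (1, deriv x t) t :=
      (hasDerivAt_id t).prodMk ((hx t).hasDerivAt)
    have hφ' : HasDerivAt φ (D (1, deriv x t)) t := by have := hDH.comp_hasDerivAt t hc; exact this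
    -- spatial derivative
    have hι : HasFDerivAt (fun v : EuclideanSpace ℝ (Fin n) => ((t, v) : ℝ × EuclideanSpace ℝ (Fin n)))
        ((ContinuousLinearMap.inr ℝ ℝ (EuclideanSpace ℝ (Fin n)))) (x t) := by
      have := HasFDerivAt.prodMk (hasFDerivAt_const (𝕜 := ℝ) t (x t)) (hasFDerivAt_id (𝕜 := ℝ) (x t))
      exact this
    have hsp : HasFDerivAt (h t) (D.comp (ContinuousLinearMap.inr ℝ ℝ (EuclideanSpace ℝ (Fin n)))) (x t) := by
      have : (h t) = H ∘ (fun v : EuclideanSpace ℝ (Fin n) => ((t, v) : ℝ × EuclideanSpace ℝ (Fin n))) := rfl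
      rw [this]
      exact hDH.comp (x t) hι
    have hsp' : fderiv ℝ (h t) (x t) (deriv x t) = D (0, deriv x t) := by
      rw [hsp.fderiv]; rfl
    -- time derivative
    have htc : HasDerivAt (fun s => ((s, x t) : ℝ × EuclideanSpace ℝ (Fin n))) (1, 0) t :=
      (hasDerivAt_id t).prodMk (hasDerivAt_const t (x t))
    have htp : HasDerivAt (fun s => h s (x t)) (D (1, 0)) t :=
      by have := hDH.comp_hasDerivAt t htc; exact this
    have htp' : deriv (fun s => h s (x t)) t = D (1, 0) := htp.deriv
    rw [hsp', htp']
    have : D (0, deriv x t) + D (1, 0) = D (1, deriv x t) := by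
      rw [← D.map_add]
      norm_num
    rw [this]
    exact hφ'
  have hφdiff : Differentiable ℝ φ := fun t => (key t).differentiableAt
  have hφcont : Continuous φ := hφdiff.continuous
  -- comparison argument
  intro t₀ ht₀
  by_contra hneg
  push_neg at hneg
  set S : Set ℝ := Set.Icc 0 t₀ ∩ φ ⁻¹' Set.Ici 0 with hS
  have hSclosed : IsClosed S := isClosed_Icc.inter (isClosed_Ici.preimage hφcont)
  have h0S : (0 : ℝ) ∈ S := ⟨⟨le_refl 0, ht₀⟩, h0⟩
  have hSne : S.Nonempty := ⟨0, h0S⟩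
  have hSbdd : BddAbove S := ⟨t₀, fun u hu => hu.1.2⟩
  set s := sSup S with hs
  have hsS : s ∈ S := hSclosed.csSup_mem hSne hSbdd
  have hs0 : 0 ≤ s := hsS.1.1
  have hst₀ : s ≤ t₀ := hsS.1.2
  have hφs : 0 ≤ φ s := hsS.2
  have hslt : s < t₀ := lt_of_le_of_ne hst₀ (fun e => by
    exact absurd hφs (by simp [e]; exact hneg))
  have hnegOn : ∀ u, s < u → u ≤ t₀ → φ u < 0 := by
    intro u hsu hut
    by_contra hge
    push_neg at hge
    have : u ∈ S := ⟨⟨le_trans hs0 hsu.le, hut⟩, hge⟩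
    exact absurd (le_csSup hSbdd this) (not_le.mpr hsu)
  -- φ monotone on [s, t₀]
  have hmono : MonotoneOn φ (Set.Icc s t₀) := by
    apply monotoneOn_of_deriv_nonneg (convex_Icc s t₀) hφcont.continuousOn
      (hφdiff.differentiableOn)
    intro u hu
    rw [interior_Icc] at hu
    have hu0 : 0 ≤ u := le_trans hs0 hu.1.le
    have hφu : φ u < 0 := hnegOn u hu.1 hu.2.le
    have : α (φ u) ≤ 0 := by
      have := hα_mono hφu.le
      rwa [hα0] at this
    have hge := hineq u hu0
    rw [(key u).deriv]
    refine le_trans ?_ hge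
    linarith
  have := hmono ⟨le_refl s, hst₀⟩ ⟨hst₀, le_refl t₀⟩ hst₀
  linarith
end
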